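/- (Theorem 4, part 1.) Let (Ω, 𝓕, P) be a probability space, W : Ω → ℝ^d measurable, u : ℝ^d → ℝ^{p_R p_L × k} and f : ℝ^d → ℝ^{m_R m_L × k} measurable with E‖u(W)‖² < ∞ and E‖f(W)‖² < ∞, and let A ∈ ℝ^{p_R p_L × p_R p_L} be nonsingular. Fix a ∈ ℝ^{p_L × m_L} and define the random matrix V₂ = (f(W)ᵀ ⊗ A) Π (I_{p_R m_R} ⊗ vec(a)), where Π = I_{m_R} ⊗ [(I_{m_L} ⊗ K_{p_R,p_L}) K_{p_L m_L, p_R}], and V₁ = vec(A u(W)). If E[V₂ᵀ V₂] is invertible, then the matrix b* ∈ ℝ^{p_R × m_R} with vec(b*) = (E[V₂ᵀ V₂])⁻¹ E[V₂ᵀ V₁] minimizes b ↦ E‖A u(W) − A (b ⊗ a) f(W)‖² over all b ∈ ℝ^{p_R × m_R}. -/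

import Mathlib

open Matrix MeasureTheory ProbabilityTheory

/-- Column-stacking vectorization of a matrix: for `A : Matrix (Fin m) (Fin n) ℝ`,
`vecF A` is the vector in `ℝ^{nm}` with `vecF A (i + m*j) = A i j`
(the columns of `A` stacked on top of each other). -/
def vecF {m n : ℕ} (A : Matrix (Fin m) (Fin n) ℝ) : Fin (n * m) → ℝ :=
  fun x => A (finProdFinEquiv.symm x).2 (finProdFinEquiv.symm x).1

/-- Kronecker product of matrices with flat `Fin` indices:
`(A ⊗ B)_{(i-1)p+k, (j-1)q+l} = A i j * B k l`. -/
def kronF {m n p q : ℕ} (A : Matrix (Fin m) (Fin n) ℝ) (B : Matrix (Fin p) (Fin q) ℝ) :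
    Matrix (Fin (m * p)) (Fin (n * q)) ℝ :=
  Matrix.of fun i j =>
    A (finProdFinEquiv.symm i).1 (finProdFinEquiv.symm j).1 *
      B (finProdFinEquiv.symm i).2 (finProdFinEquiv.symm j).2

/-- Kronecker product of vectors: `(v ⊗ w)_{(i-1)n+j} = v i * w j`. -/
def vkronF {m n : ℕ} (v : Fin m → ℝ) (w : Fin n → ℝ) : Fin (m * n) → ℝ :=
  fun x => v (finProdFinEquiv.symm x).1 * w (finProdFinEquiv.symm x).2

/-- The commutation matrix `K_{m,n}`, the unique `mn × mn` matrix such that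
`K_{m,n} vec(A) = vec(Aᵀ)` for every `A : Matrix (Fin m) (Fin n) ℝ`. -/
def commF (m n : ℕ) : Matrix (Fin (m * n)) (Fin (n * m)) ℝ :=
  Matrix.of fun p q =>
    if (finProdFinEquiv.symm p : Fin m × Fin n) = (finProdFinEquiv.symm q : Fin n × Fin m).swap
    then 1 else 0

/-- A vector viewed as a one-column matrix. -/
def colM {n : ℕ} (v : Fin n → ℝ) : Matrix (Fin n) (Fin 1) ℝ :=
  Matrix.of fun i _ => v i

/-- The matrix `Π = I_{r₂} ⊗ [(I_{r₄} ⊗ K_{r₁,r₃}) K_{r₃r₄,r₁}]` of Lemma 1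
(dimension-equalities are handled by the identity reindexing `finCongr`). -/
noncomputable def PiMat (r1 r2 r3 r4 : ℕ) :
    Matrix (Fin (r2 * (r4 * (r1 * r3)))) (Fin (r2 * (r1 * (r4 * r3)))) ℝ :=
  kronF (1 : Matrix (Fin r2) (Fin r2) ℝ)
    ((kronF (1 : Matrix (Fin r4) (Fin r4) ℝ) (commF r1 r3)) *
      (Matrix.reindex (finCongr (show (r4 * r3) * r1 = r4 * (r3 * r1) by ring)) (Equiv.refl _)
        (commF (r4 * r3) r1)))

/-- Real matrices carry the Borel (product) σ-algebra. -/
noncomputable instance {m n : ℕ} : MeasurableSpace (Matrix (Fin m) (Fin n) ℝ) :=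
  (inferInstance : MeasurableSpace (Fin m → Fin n → ℝ))

-- infrastructure
abbrev fp {m n : ℕ} (i : Fin m) (j : Fin n) : Fin (m * n) := finProdFinEquiv (i, j)

lemma fp_symm {m n : ℕ} (i : Fin m) (j : Fin n) :
    (finProdFinEquiv.symm (fp i j) : Fin m × Fin n) = (i, j) :=
  Equiv.symm_apply_apply _ _

lemma fp_surj {m n : ℕ} (x : Fin (m * n)) :
    ∃ i j, x = fp i j :=
  ⟨(finProdFinEquiv.symm x).1, (finProdFinEquiv.symm x).2,
    (Equiv.apply_symm_apply finProdFinEquiv x).symm⟩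

lemma sum_fp {m n : ℕ} (f : Fin (m * n) → ℝ) :
    ∑ x, f x = ∑ i : Fin m, ∑ j : Fin n, f (fp i j) := by
  rw [← Equiv.sum_comp (finProdFinEquiv : Fin m × Fin n ≃ Fin (m*n)) f, Fintype.sum_prod_type]

lemma vecF_fp {m n : ℕ} (A : Matrix (Fin m) (Fin n) ℝ) (i : Fin m) (j : Fin n) :
    vecF A (fp j i) = A i j := by simp only [vecF, fp_symm]

lemma kronF_fp {m n p q : ℕ} (A : Matrix (Fin m) (Fin n) ℝ) (B : Matrix (Fin p) (Fin q) ℝ)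
    (i : Fin m) (k : Fin p) (j : Fin n) (l : Fin q) :
    kronF A B (fp i k) (fp j l) = A i j * B k l := by
  simp only [kronF, Matrix.of_apply, fp_symm]

lemma vkronF_fp {m n : ℕ} (v : Fin m → ℝ) (w : Fin n → ℝ) (i : Fin m) (j : Fin n) :
    vkronF v w (fp i j) = v i * w j := by simp only [vkronF, fp_symm]

lemma commF_fp {m n : ℕ} (i : Fin m) (j : Fin n) (c : Fin n) (d : Fin m) :
    commF m n (fp i j) (fp c d) = if (i, j) = (d, c) then 1 else 0 := by
  simp only [commF, Matrix.of_apply, fp_symm, Prod.swap]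

lemma fp_val {m n : ℕ} (i : Fin m) (j : Fin n) : (fp i j).val = j.val + n * i.val := rfl

lemma fp_assoc {m n p : ℕ} (h : m * (n * p) = (m * n) * p)
    (i : Fin m) (j : Fin n) (z : Fin p) :
    finCongr h (fp i (fp j z)) = fp (fp i j) z := by
  apply Fin.ext
  simp only [finCongr_apply, Fin.coe_cast, fp_val]
  ring

lemma fp_one {n : ℕ} (h : n * 1 = n) (i : Fin n) (z : Fin 1) :
    finCongr h (fp i z) = i := by
  apply Fin.ext
  simp only [finCongr_apply, Fin.coe_cast, fp_val]
  omega

lemma vec_mul3 {p q r s : ℕ} (X : Matrix (Fin p) (Fin q) ℝ) (Y : Matrix (Fin q) (Fin r) ℝ)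
    (Z : Matrix (Fin r) (Fin s) ℝ) :
    vecF (X * Y * Z) = kronF Zᵀ X *ᵥ vecF Y := by
  funext x
  obtain ⟨j, i, rfl⟩ := fp_surj x
  rw [vecF_fp]
  have hlhs : (X * Y * Z) i j = ∑ l, ∑ c, X i c * Y c l * Z l j := by
    simp only [Matrix.mul_apply, Finset.sum_mul]
  rw [hlhs, mulVec, dotProduct, sum_fp]
  refine Finset.sum_congr rfl fun l _ => Finset.sum_congr rfl fun c _ => ?_
  rw [kronF_fp, vecF_fp, Matrix.transpose_apply]; ring

lemma commF_mulVec {m n : ℕ} (A : Matrix (Fin m) (Fin n) ℝ) :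
    commF m n *ᵥ vecF A = vecF Aᵀ := by
  funext x
  obtain ⟨i, j, rfl⟩ := fp_surj x
  rw [mulVec, dotProduct, sum_fp, Finset.sum_comm]
  rw [Fintype.sum_eq_single i (fun d hd => Finset.sum_eq_zero fun c _ => by
    rw [commF_fp, if_neg (fun h => hd (congrArg Prod.fst h).symm), zero_mul])]
  rw [Fintype.sum_eq_single j (fun c hc => by
    rw [commF_fp, if_neg (fun h => hc (congrArg Prod.snd h).symm), zero_mul])]
  rw [commF_fp, if_pos rfl, one_mul, vecF_fp, vecF_fp, Matrix.transpose_apply]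
lemma kron_one_mulVec {N p q : ℕ} (C : Matrix (Fin p) (Fin q) ℝ) (v : Fin (N * q) → ℝ)
    (i : Fin N) (y : Fin p) :
    (kronF (1 : Matrix (Fin N) (Fin N) ℝ) C *ᵥ v) (fp i y) = (C *ᵥ fun c => v (fp i c)) y := by
  rw [mulVec, dotProduct, sum_fp]
  rw [Fintype.sum_eq_single i (fun i' hi' => Finset.sum_eq_zero fun c _ => by
    rw [kronF_fp, Matrix.one_apply_ne (Ne.symm hi'), zero_mul, zero_mul])]
  simp only [kronF_fp, Matrix.one_apply_eq, one_mul, mulVec, dotProduct]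

lemma reindex_mulVec_left {m n p : ℕ} (e : Fin m ≃ Fin p) (C : Matrix (Fin m) (Fin n) ℝ)
    (v : Fin n → ℝ) :
    (Matrix.reindex e (Equiv.refl (Fin n)) C) *ᵥ v = fun t => (C *ᵥ v) (e.symm t) := by
  funext t
  simp [Matrix.reindex_apply, Matrix.mulVec, Matrix.submatrix_apply, dotProduct]

lemma reindex_mulVec_right {m n p : ℕ} (e : Fin n ≃ Fin p) (C : Matrix (Fin m) (Fin n) ℝ)
    (v : Fin p → ℝ) :
    (Matrix.reindex (Equiv.refl (Fin m)) e C) *ᵥ v = C *ᵥ (fun j => v (e j)) := by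
  funext i
  simp only [Matrix.reindex_apply, Matrix.mulVec, Matrix.submatrix_apply, dotProduct,
    Equiv.refl_symm, Equiv.refl_apply]
  rw [← Equiv.sum_comp e (fun j => C i (e.symm j) * v j)]
  simp

lemma kron_colM_mulVec {N q : ℕ} (v : Fin N → ℝ) (w : Fin q → ℝ) (h : N * 1 = N) :
    kronF (1 : Matrix (Fin N) (Fin N) ℝ) (colM w) *ᵥ (fun x => v (finCongr h x)) =
      vkronF v w := by
  funext x
  obtain ⟨α, β, rfl⟩ := fp_surj x
  rw [kron_one_mulVec, vkronF_fp, mulVec, dotProduct, Fin.sum_univ_one, fp_one h]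
  simp only [colM, Matrix.of_apply]
  ring

lemma lemma1 {r1 r2 r3 r4 : ℕ} (b : Matrix (Fin r1) (Fin r2) ℝ) (a : Matrix (Fin r3) (Fin r4) ℝ)
    (h2 : (r2 * r1) * (r4 * r3) = r2 * (r1 * (r4 * r3)))
    (h3 : r2 * (r4 * (r1 * r3)) = (r2 * r4) * (r1 * r3)) :
    PiMat r1 r2 r3 r4 *ᵥ (fun y => vkronF (vecF b) (vecF a) ((finCongr h2).symm y)) =
      fun x => vecF (kronF b a) (finCongr h3 x) := by
  funext x
  obtain ⟨i, y, rfl⟩ := fp_surj x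
  obtain ⟨l, z, rfl⟩ := fp_surj y
  obtain ⟨j, s, rfl⟩ := fp_surj z
  have hrhs : vecF (kronF b a) (finCongr h3 (fp i (fp l (fp j s)))) = b j i * a s l := by
    rw [fp_assoc h3, vecF_fp, kronF_fp]
  rw [hrhs, PiMat, kron_one_mulVec]
  set Bmat : Matrix (Fin (r4 * r3)) (Fin r1) ℝ := Matrix.of fun z j => b j i * vecF a z with hB
  have hwB : (fun c => vkronF (vecF b) (vecF a) ((finCongr h2).symm (fp i c))) = vecF Bmat := by
    funext c
    obtain ⟨j', z', rfl⟩ := fp_surj c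
    rw [finCongr_symm, fp_assoc h2.symm, vkronF_fp, vecF_fp, vecF_fp]
    rfl
  rw [← Matrix.mulVec_mulVec, reindex_mulVec_left, hwB, commF_mulVec, kron_one_mulVec]
  set D : Matrix (Fin r1) (Fin r3) ℝ := Matrix.of fun j s => b j i * a s l with hD
  have hvD : (fun t => vecF Bmatᵀ ((finCongr (show (r4*r3)*r1 = r4*(r3*r1) by ring)).symm (fp l t)))
      = vecF D := by
    funext t
    obtain ⟨s', j', rfl⟩ := fp_surj t
    rw [finCongr_symm, fp_assoc, vecF_fp, vecF_fp]
    · simp only [hB, hD, Matrix.transpose_apply, Matrix.of_apply, vecF_fp]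
  rw [hvD, commF_mulVec, vecF_fp]
  simp [hD]

lemma main_alg {pR pL mR mL k : ℕ}
    (A : Matrix (Fin (pR * pL)) (Fin (pR * pL)) ℝ)
    (a : Matrix (Fin pL) (Fin mL) ℝ)
    (F : Matrix (Fin (mR * mL)) (Fin k) ℝ)
    (b : Matrix (Fin pR) (Fin mR) ℝ)
    (h1 : (mR * pR) * 1 = mR * pR)
    (hp : mR * (mL * (pR * pL)) = (mR * mL) * (pR * pL))
    (hg : (mR * pR) * (mL * pL) = mR * (pR * (mL * pL))) :
    (Matrix.reindex (Equiv.refl (Fin (k * (pR * pL)))) (finCongr h1)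
      (kronF Fᵀ A *
        Matrix.reindex (finCongr hp) (Equiv.refl _) (PiMat pR mR pL mL) *
        Matrix.reindex (finCongr hg) (Equiv.refl _)
          (kronF (1 : Matrix (Fin (mR * pR)) (Fin (mR * pR)) ℝ) (colM (vecF a))))) *ᵥ vecF b =
      vecF (A * kronF b a * F) := by
  rw [reindex_mulVec_right, ← Matrix.mulVec_mulVec, ← Matrix.mulVec_mulVec]
  rw [reindex_mulVec_left (finCongr hg), kron_colM_mulVec (vecF b) (vecF a) h1]
  rw [reindex_mulVec_left (finCongr hp), lemma1 b a hg hp]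
  have h4 : (fun t => vecF (kronF b a) (finCongr hp ((finCongr hp).symm t))) = vecF (kronF b a) := by
    funext t; rw [Equiv.apply_symm_apply]
  rw [h4, ← vec_mul3]
lemma L2_mul_integrable {Ω : Type*} [MeasurableSpace Ω] {P : Measure Ω} {f g : Ω → ℝ}
    (hf : MemLp f 2 P) (hg : MemLp g 2 P) : Integrable (fun ω => f ω * g ω) P := by
  have h1 := (hf.add hg).integrable_sq
  have h2 := hf.integrable_sq
  have h3 := hg.integrable_sq
  have heq : (fun ω => f ω * g ω) = fun ω => ((f + g) ω ^ 2 - f ω ^ 2 - g ω ^ 2) / 2 := by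
    funext ω; simp only [Pi.add_apply]; ring
  rw [heq]
  exact ((h1.sub h2).sub h3).div_const 2


/-- Theorem 4, part 1: for fixed `f` and `a`, the minimizer of
`b ↦ E‖A u(W) − A (b ⊗ a) f(W)‖²` is given by
`vec(b*) = (E[V₂ᵀV₂])⁻¹ E[V₂ᵀV₁]` with `V₁ = vec(A u(W))` and
`V₂ = (f(W)ᵀ ⊗ A) Π (I_{p_R m_R} ⊗ vec(a))`. -/
theorem folded_ls_minimizer_b {Ω : Type*} [mΩ : MeasurableSpace Ω]
    (P : Measure Ω) [IsProbabilityMeasure P]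
    (d pR pL mR mL k : ℕ)
    (W : Ω → Fin d → ℝ) (hW : Measurable W)
    (u : (Fin d → ℝ) → Matrix (Fin (pR * pL)) (Fin k) ℝ) (hu : Measurable u)
    (f : (Fin d → ℝ) → Matrix (Fin (mR * mL)) (Fin k) ℝ) (hf : Measurable f)
    (huL2 : ∀ i j, MemLp (fun ω => u (W ω) i j) 2 P)
    (hfL2 : ∀ i j, MemLp (fun ω => f (W ω) i j) 2 P)
    (A : Matrix (Fin (pR * pL)) (Fin (pR * pL)) ℝ) (hA : IsUnit A)
    (a : Matrix (Fin pL) (Fin mL) ℝ)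
    (V1 : Ω → Fin (k * (pR * pL)) → ℝ)
    (hV1 : ∀ ω, V1 ω = vecF (A * u (W ω)))
    (V2 : Ω → Matrix (Fin (k * (pR * pL))) (Fin (mR * pR)) ℝ)
    (hV2 : ∀ ω, V2 ω =
      Matrix.reindex (Equiv.refl _) (finCongr (show (mR * pR) * 1 = mR * pR by ring))
        (kronF (f (W ω))ᵀ A *
          Matrix.reindex (finCongr (show mR * (mL * (pR * pL)) = (mR * mL) * (pR * pL) by ring))
            (Equiv.refl _) (PiMat pR mR pL mL) *
          Matrix.reindex (finCongr (show (mR * pR) * (mL * pL) = mR * (pR * (mL * pL)) by ring))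
            (Equiv.refl _)
            (kronF (1 : Matrix (Fin (mR * pR)) (Fin (mR * pR)) ℝ) (colM (vecF a)))))
    (M2 : Matrix (Fin (mR * pR)) (Fin (mR * pR)) ℝ)
    (hM2 : ∀ i j, M2 i j = ∫ ω, ((V2 ω)ᵀ * V2 ω) i j ∂P)
    (hM2inv : IsUnit M2)
    (M1 : Fin (mR * pR) → ℝ) (hM1 : ∀ i, M1 i = ∫ ω, ((V2 ω)ᵀ *ᵥ V1 ω) i ∂P)
    (bstar : Matrix (Fin pR) (Fin mR) ℝ) (hbstar : vecF bstar = M2⁻¹ *ᵥ M1) :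
    ∀ b : Matrix (Fin pR) (Fin mR) ℝ,
      ∫ ω, ∑ i, ∑ j, (A * u (W ω) - A * kronF bstar a * f (W ω)) i j ^ 2 ∂P ≤
        ∫ ω, ∑ i, ∑ j, (A * u (W ω) - A * kronF b a * f (W ω)) i j ^ 2 ∂P := by
  intro b
  -- key algebraic identity
  have hkey : ∀ ω (c : Matrix (Fin pR) (Fin mR) ℝ),
      V2 ω *ᵥ vecF c = vecF (A * kronF c a * f (W ω)) := by
    intro ω c
    rw [hV2 ω]
    exact main_alg A a (f (W ω)) c _ _ _
  -- L² facts
  have hV1L2 : ∀ i, MemLp (fun ω => V1 ω i) 2 P := by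
    intro i
    have heq : (fun ω => V1 ω i) =
        ∑ c : Fin (pR * pL), fun ω =>
          A (finProdFinEquiv.symm i).2 c * u (W ω) c (finProdFinEquiv.symm i).1 := by
      funext ω
      rw [Finset.sum_apply, hV1]
      simp only [vecF, Matrix.mul_apply]
    rw [heq]
    exact memLp_finset_sum' _ fun c _ => ((huL2 c _).const_mul _)
  have hV2L2 : ∀ i j, MemLp (fun ω => V2 ω i j) 2 P := by
    intro i j
    have heq : (fun ω => V2 ω i j) =
        ∑ c : Fin ((mR * mL) * (pR * pL)), fun ω =>
          (A (finProdFinEquiv.symm i).2 (finProdFinEquiv.symm c).2 *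
            ((Matrix.reindex
                (finCongr (show mR * (mL * (pR * pL)) = (mR * mL) * (pR * pL) by ring))
                (Equiv.refl _) (PiMat pR mR pL mL) *
              Matrix.reindex
                (finCongr (show (mR * pR) * (mL * pL) = mR * (pR * (mL * pL)) by ring))
                (Equiv.refl _)
                (kronF (1 : Matrix (Fin (mR * pR)) (Fin (mR * pR)) ℝ) (colM (vecF a)))) c
              ((finCongr (show (mR * pR) * 1 = mR * pR by ring)).symm j))) *
          f (W ω) (finProdFinEquiv.symm c).1 (finProdFinEquiv.symm i).1 := by
      funext ω
      rw [Finset.sum_apply, hV2]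
      simp only [Matrix.reindex_apply, Matrix.submatrix_apply, Equiv.refl_symm, Equiv.refl_apply,
        Matrix.mul_assoc]
      rw [Matrix.mul_apply]
      refine Finset.sum_congr rfl fun c _ => ?_
      simp only [kronF, Matrix.of_apply, Matrix.transpose_apply]
      ring
    rw [heq]
    exact memLp_finset_sum' _ fun c _ => ((hfL2 _ _).const_mul _)
  have hVxL2 : ∀ (x : Fin (mR * pR) → ℝ) i, MemLp (fun ω => (V2 ω *ᵥ x) i) 2 P := by
    intro x i
    have heq : (fun ω => (V2 ω *ᵥ x) i) =
        ∑ j : Fin (mR * pR), fun ω => x j * V2 ω i j := by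
      funext ω
      rw [Finset.sum_apply]
      simp only [Matrix.mulVec, dotProduct]
      exact Finset.sum_congr rfl fun j _ => mul_comm _ _
    rw [heq]
    exact memLp_finset_sum' _ fun j _ => ((hV2L2 i j).const_mul _)
  have hResL2 : ∀ (x : Fin (mR * pR) → ℝ) i,
      MemLp (fun ω => V1 ω i - (V2 ω *ᵥ x) i) 2 P :=
    fun x i => (hV1L2 i).sub (hVxL2 x i)
  -- objective rewrite
  have hfrob : ∀ (M : Matrix (Fin (pR * pL)) (Fin k) ℝ),
      ∑ i, ∑ j, M i j ^ 2 = ∑ x, (vecF M x) ^ 2 := by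
    intro M
    rw [sum_fp (fun x => vecF M x ^ 2), Finset.sum_comm]
    exact Finset.sum_congr rfl fun i _ => Finset.sum_congr rfl fun j _ => by rw [vecF_fp]
  have hobj : ∀ (c : Matrix (Fin pR) (Fin mR) ℝ),
      (fun ω => ∑ i, ∑ j, (A * u (W ω) - A * kronF c a * f (W ω)) i j ^ 2) =
        fun ω => ∑ x, (V1 ω x - (V2 ω *ᵥ vecF c) x) ^ 2 := by
    intro c
    funext ω
    rw [hfrob, hV1 ω, hkey ω c]
    exact Finset.sum_congr rfl fun x _ => rfl
  -- normal equation
  have hnorm : M2 *ᵥ vecF bstar = M1 := by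
    rw [hbstar, Matrix.mulVec_mulVec,
      Matrix.mul_nonsing_inv _ ((Matrix.isUnit_iff_isUnit_det M2).mp hM2inv),
      Matrix.one_mulVec]
  -- integrability
  have intSq : ∀ (x : Fin (mR * pR) → ℝ),
      Integrable (fun ω => ∑ i, (V1 ω i - (V2 ω *ᵥ x) i) ^ 2) P :=
    fun x => integrable_finset_sum _ fun i _ => (hResL2 x i).integrable_sq
  have intQuad : Integrable (fun ω => ∑ i, ((V2 ω *ᵥ (vecF b - vecF bstar)) i) ^ 2) P :=
    integrable_finset_sum _ fun i _ => (hVxL2 (vecF b - vecF bstar) i).integrable_sq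
  have intCross : Integrable
      (fun ω => ∑ i, (V1 ω i - (V2 ω *ᵥ vecF bstar) i) * (V2 ω *ᵥ (vecF b - vecF bstar)) i) P :=
    integrable_finset_sum _ fun i _ => L2_mul_integrable (hResL2 (vecF bstar) i) (hVxL2 (vecF b - vecF bstar) i)
  -- pointwise split
  have hsplit : ∀ ω i, (V2 ω *ᵥ vecF b) i = (V2 ω *ᵥ vecF bstar) i + (V2 ω *ᵥ (vecF b - vecF bstar)) i := by
    intro ω i
    rw [Matrix.mulVec_sub, Pi.sub_apply]
    ring
  have hptw : ∀ ω, ∑ i, (V1 ω i - (V2 ω *ᵥ vecF b) i) ^ 2 =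
      (∑ i, (V1 ω i - (V2 ω *ᵥ vecF bstar) i) ^ 2) +
        ((∑ i, ((V2 ω *ᵥ (vecF b - vecF bstar)) i) ^ 2) -
          2 * ∑ i, (V1 ω i - (V2 ω *ᵥ vecF bstar) i) * (V2 ω *ᵥ (vecF b - vecF bstar)) i) := by
    intro ω
    rw [Finset.mul_sum, ← Finset.sum_sub_distrib, ← Finset.sum_add_distrib]
    refine Finset.sum_congr rfl fun i _ => ?_
    rw [hsplit ω i]; ring
  -- cross term rewrite
  have hcross_eq : ∀ ω, ∑ i, (V1 ω i - (V2 ω *ᵥ vecF bstar) i) * (V2 ω *ᵥ (vecF b - vecF bstar)) i =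
      (∑ j, ((V2 ω)ᵀ *ᵥ V1 ω) j * (vecF b - vecF bstar) j) -
        ∑ j, ∑ l, ((V2 ω)ᵀ * V2 ω) j l * (vecF bstar l * (vecF b - vecF bstar) j) := by
    intro ω
    have h1 : ∑ i, (V1 ω i - (V2 ω *ᵥ vecF bstar) i) * (V2 ω *ᵥ (vecF b - vecF bstar)) i =
        (fun i => V1 ω i - (V2 ω *ᵥ vecF bstar) i) ⬝ᵥ (V2 ω *ᵥ (vecF b - vecF bstar)) := rfl
    have h2 : (fun i => V1 ω i - (V2 ω *ᵥ vecF bstar) i) = V1 ω - (V2 ω *ᵥ vecF bstar) := rfl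
    rw [h1, h2, Matrix.dotProduct_mulVec, ← Matrix.mulVec_transpose, Matrix.mulVec_sub,
      Matrix.mulVec_mulVec, sub_dotProduct]
    congr 1
    simp only [Matrix.mulVec, dotProduct, Finset.sum_mul]
    refine Finset.sum_congr rfl fun j _ => Finset.sum_congr rfl fun l _ => by ring
  -- integrable pieces of cross
  have intT1 : ∀ j, Integrable (fun ω => ((V2 ω)ᵀ *ᵥ V1 ω) j) P := by
    intro j
    have heq : (fun ω => ((V2 ω)ᵀ *ᵥ V1 ω) j) =
        fun ω => ∑ i, V2 ω i j * V1 ω i := by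
      funext ω; simp only [Matrix.mulVec, dotProduct, Matrix.transpose_apply]
    rw [heq]
    exact integrable_finset_sum _ fun i _ => L2_mul_integrable (hV2L2 i j) (hV1L2 i)
  have intT2 : ∀ j l, Integrable (fun ω => ((V2 ω)ᵀ * V2 ω) j l) P := by
    intro j l
    have heq : (fun ω => ((V2 ω)ᵀ * V2 ω) j l) = fun ω => ∑ i, V2 ω i j * V2 ω i l := by
      funext ω; simp only [Matrix.mul_apply, Matrix.transpose_apply]
    rw [heq]
    exact integrable_finset_sum _ fun i _ => L2_mul_integrable (hV2L2 i j) (hV2L2 i l)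
  -- integral of cross = 0
  have hcross0 : ∫ ω, ∑ i, (V1 ω i - (V2 ω *ᵥ vecF bstar) i) * (V2 ω *ᵥ (vecF b - vecF bstar)) i ∂P = 0 := by
    have hre : (fun ω => ∑ i, (V1 ω i - (V2 ω *ᵥ vecF bstar) i) * (V2 ω *ᵥ (vecF b - vecF bstar)) i) =
        fun ω => (∑ j, ((V2 ω)ᵀ *ᵥ V1 ω) j * (vecF b - vecF bstar) j) -
          ∑ j, ∑ l, ((V2 ω)ᵀ * V2 ω) j l * (vecF bstar l * (vecF b - vecF bstar) j) := by
      funext ω; exact hcross_eq ω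
    rw [hre, integral_sub]
    · have e1 : ∫ ω, ∑ j, ((V2 ω)ᵀ *ᵥ V1 ω) j * (vecF b - vecF bstar) j ∂P = ∑ j, M1 j * (vecF b - vecF bstar) j := by
        rw [integral_finset_sum _ fun j _ => (intT1 j).mul_const _]
        exact Finset.sum_congr rfl fun j _ => by rw [integral_mul_const, hM1]
      have e2 : ∫ ω, ∑ j, ∑ l, ((V2 ω)ᵀ * V2 ω) j l * (vecF bstar l * (vecF b - vecF bstar) j) ∂P =
          ∑ j, (M2 *ᵥ vecF bstar) j * (vecF b - vecF bstar) j := by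
        rw [integral_finset_sum _ fun j _ =>
          integrable_finset_sum _ fun l _ => (intT2 j l).mul_const _]
        refine Finset.sum_congr rfl fun j _ => ?_
        rw [integral_finset_sum _ fun l _ => (intT2 j l).mul_const _]
        simp only [Matrix.mulVec, dotProduct, Finset.sum_mul]
        refine Finset.sum_congr rfl fun l _ => ?_
        rw [integral_mul_const, hM2]; ring
      rw [e1, e2, hnorm]
      exact sub_self _
    · exact integrable_finset_sum _ fun j _ => (intT1 j).mul_const _
    · exact integrable_finset_sum _ fun j _ =>
        integrable_finset_sum _ fun l _ => (intT2 j l).mul_const _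
  -- assemble
  rw [hobj bstar, hobj b]
  have hdecomp : ∫ ω, ∑ x, (V1 ω x - (V2 ω *ᵥ vecF b) x) ^ 2 ∂P =
      (∫ ω, ∑ x, (V1 ω x - (V2 ω *ᵥ vecF bstar) x) ^ 2 ∂P) +
        ∫ ω, ∑ i, ((V2 ω *ᵥ (vecF b - vecF bstar)) i) ^ 2 ∂P := by
    have hre : (fun ω => ∑ x, (V1 ω x - (V2 ω *ᵥ vecF b) x) ^ 2) =
        fun ω => (∑ i, (V1 ω i - (V2 ω *ᵥ vecF bstar) i) ^ 2) +
          ((∑ i, ((V2 ω *ᵥ (vecF b - vecF bstar)) i) ^ 2) -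
            2 * ∑ i, (V1 ω i - (V2 ω *ᵥ vecF bstar) i) * (V2 ω *ᵥ (vecF b - vecF bstar)) i) := by
      funext ω; exact hptw ω
    have i2 : Integrable (fun ω =>
        2 * ∑ i, (V1 ω i - (V2 ω *ᵥ vecF bstar) i) * (V2 ω *ᵥ (vecF b - vecF bstar)) i) P :=
      intCross.const_mul 2
    have iG : Integrable (fun ω =>
        (∑ i, ((V2 ω *ᵥ (vecF b - vecF bstar)) i) ^ 2) -
          2 * ∑ i, (V1 ω i - (V2 ω *ᵥ vecF bstar) i) * (V2 ω *ᵥ (vecF b - vecF bstar)) i) P :=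
      intQuad.sub i2
    rw [hre, integral_add (intSq (vecF bstar)) iG, integral_sub intQuad i2,
      integral_const_mul, hcross0]
    ring
  rw [hdecomp]
  have hq : 0 ≤ ∫ ω, ∑ i, ((V2 ω *ᵥ (vecF b - vecF bstar)) i) ^ 2 ∂P :=
    integral_nonneg fun ω => Finset.sum_nonneg fun i _ => sq_nonneg _
  linarith
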